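/- Let $\phi_1,\phi_2,\dots,\phi_K$ be exchangeable Bernoulli random variables with $\mathbb{E}[\phi_1] \le \alpha$. Then $\mathbb{P}\left(\exists\, k \le K : \frac{1}{k}\sum_{j=1}^k \phi_j \ge \frac{1}{2}\right) \le 2\alpha$. -/

import Mathlib

open MeasureTheory

namespace ExchRM
variable {K : ℕ}

noncomputable def S (m : ℕ) (x : Fin K → ℝ) : ℝ :=
  ∑ j ∈ Finset.univ.filter (fun j : Fin K => (j : ℕ) ≤ m), x j

noncomputable def Y (m : ℕ) (x : Fin K → ℝ) : ℝ := ((m : ℝ) + 1)⁻¹ * S m x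

def B (K : ℕ) (m : ℕ) : Set (Fin K → ℝ) :=
  {x | ∀ j : Fin K, m < (j : ℕ) → Y (j : ℕ) x < 1 / 2}

def A (K : ℕ) : Set (Fin K → ℝ) := {x | ∃ k : Fin K, 1 / 2 ≤ Y (k : ℕ) x}

def C (K : ℕ) (m : ℕ) : Set (Fin K → ℝ) :=
  if m = 0 then B K 0 else B K m \ B K (m - 1)

lemma measurable_S (m : ℕ) : Measurable (S (K := K) m) := by
  apply Finset.measurable_sum
  exact fun j _ => measurable_pi_apply j

lemma measurable_Y (m : ℕ) : Measurable (Y (K := K) m) :=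
  (measurable_S m).const_mul _

lemma measurableSet_B (m : ℕ) : MeasurableSet (B K m) := by
  have : B K m = ⋂ j : Fin K, ⋂ _ : m < (j : ℕ), {x | Y (j : ℕ) x < 1 / 2} := by
    ext x; simp [B, Set.mem_iInter]
  rw [this]
  exact MeasurableSet.iInter fun j => MeasurableSet.iInter fun _ =>
    measurableSet_lt (measurable_Y _) measurable_const

lemma measurableSet_A : MeasurableSet (A K) := by
  have : A K = ⋃ k : Fin K, {x | 1 / 2 ≤ Y (k : ℕ) x} := by
    ext x; simp [A]
  rw [this]
  exact MeasurableSet.iUnion fun k => measurableSet_le measurable_const (measurable_Y _)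

lemma measurableSet_C (m : ℕ) : MeasurableSet (C K m) := by
  unfold C
  split
  · exact measurableSet_B 0
  · exact (measurableSet_B m).diff (measurableSet_B (m - 1))

lemma B_mono {m m' : ℕ} (h : m ≤ m') : B K m ⊆ B K m' := by
  intro x hx j hj
  exact hx j (lt_of_le_of_lt h hj)

lemma S_swap (a b : Fin K) (j : ℕ) (ha : (a : ℕ) ≤ j) (hb : (b : ℕ) ≤ j)
    (x : Fin K → ℝ) : S j (x ∘ Equiv.swap a b) = S j x := by
  unfold S
  refine Finset.sum_equiv (Equiv.swap a b) ?_ ?_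
  · intro i
    simp only [Finset.mem_filter, Finset.mem_univ, true_and]
    rcases eq_or_ne i a with rfl | hia
    · simp [Equiv.swap_apply_left]; omega
    rcases eq_or_ne i b with rfl | hib
    · simp [Equiv.swap_apply_right]; omega
    · rw [Equiv.swap_apply_of_ne_of_ne hia hib]
  · intro i _
    rfl

lemma Y_swap (a b : Fin K) (j : ℕ) (ha : (a : ℕ) ≤ j) (hb : (b : ℕ) ≤ j)
    (x : Fin K → ℝ) : Y j (x ∘ Equiv.swap a b) = Y j x := by
  unfold Y; rw [S_swap a b j ha hb]

lemma B_swap (m : ℕ) (a b : Fin K) (ha : (a : ℕ) ≤ m + 1) (hb : (b : ℕ) ≤ m + 1)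
    (x : Fin K → ℝ) : x ∘ Equiv.swap a b ∈ B K m ↔ x ∈ B K m := by
  unfold B
  constructor <;> intro h j hj
  · have := h j hj
    rwa [Y_swap a b (j : ℕ) (by omega) (by omega)] at this
  · rw [Y_swap a b (j : ℕ) (by omega) (by omega)]
    exact h j hj

end ExchRM

namespace ExchRM
variable {K : ℕ}

lemma measurable_comp_perm (e : Equiv.Perm (Fin K)) :
    Measurable (fun x : Fin K → ℝ => x ∘ e) :=
  measurable_pi_lambda _ fun k => measurable_pi_apply (e k)

lemma integral_comp_perm (ν : Measure (Fin K → ℝ))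
    (hswap : ∀ e : Equiv.Perm (Fin K), Measure.map (fun x : Fin K → ℝ => x ∘ e) ν = ν)
    (e : Equiv.Perm (Fin K)) (G : (Fin K → ℝ) → ℝ) (hG : AEStronglyMeasurable G ν) :
    ∫ x, G (x ∘ e) ∂ν = ∫ x, G x ∂ν := by
  conv_rhs => rw [← hswap e]
  rw [integral_map (measurable_comp_perm e).aemeasurable (by rw [hswap e]; exact hG)]

lemma key_coord (ν : Measure (Fin K → ℝ))
    (hswap : ∀ e : Equiv.Perm (Fin K), Measure.map (fun x : Fin K → ℝ => x ∘ e) ν = ν)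
    (m : ℕ) (hm : m + 1 < K) (i : Fin K) (hi : (i : ℕ) ≤ m + 1) :
    ∫ x in B K m, x i ∂ν = ∫ x in B K m, x ⟨m + 1, hm⟩ ∂ν := by
  set n : Fin K := ⟨m + 1, hm⟩ with hn
  set e := Equiv.swap i n with he
  set G := (B K m).indicator (fun x => x n) with hG
  have hGm : AEStronglyMeasurable G ν :=
    ((measurable_pi_apply n).indicator (measurableSet_B m)).aestronglyMeasurable
  have h : ∀ x, G (x ∘ e) = (B K m).indicator (fun x => x i) x := by
    intro x
    have hmem := B_swap m i n hi le_rfl x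
    by_cases hx : x ∈ B K m
    · rw [hG, Set.indicator_of_mem (hmem.mpr hx), Set.indicator_of_mem hx]
      simp [he, Equiv.swap_apply_right]
    · rw [hG, Set.indicator_of_notMem (fun hc => hx (hmem.mp hc)),
        Set.indicator_of_notMem hx]
  calc ∫ x in B K m, x i ∂ν
      = ∫ x, (B K m).indicator (fun x => x i) x ∂ν :=
        (integral_indicator (measurableSet_B m)).symm
    _ = ∫ x, G (x ∘ e) ∂ν := by simp only [h]
    _ = ∫ x, G x ∂ν := integral_comp_perm ν hswap e G hGm
    _ = ∫ x in B K m, x n ∂ν := integral_indicator (measurableSet_B m)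

lemma filter_card (m : ℕ) (hm : m < K) :
    (Finset.univ.filter (fun j : Fin K => (j : ℕ) ≤ m)).card = m + 1 := by
  have : Finset.univ.filter (fun j : Fin K => (j : ℕ) ≤ m) = Finset.Iic ⟨m, hm⟩ := by
    ext j; simp [Fin.le_def]
  rw [this, Fin.card_Iic]

end ExchRM

namespace ExchRM
variable {K : ℕ}

lemma integrable_coord (ν : Measure (Fin K → ℝ)) [IsProbabilityMeasure ν]
    (h01ae : ∀ᵐ x ∂ν, ∀ i, x i = 0 ∨ x i = 1) (i : Fin K) :
    Integrable (fun x => x i) ν := by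
  refine Integrable.mono' (integrable_const 1) (measurable_pi_apply i).aestronglyMeasurable ?_
  filter_upwards [h01ae] with x hx
  rcases hx i with h | h <;> simp [h]

lemma abs_S_le (m : ℕ) (x : Fin K → ℝ) (hx : ∀ i, x i = 0 ∨ x i = 1) :
    |S m x| ≤ K := by
  have h1 : ∀ j ∈ Finset.univ.filter (fun j : Fin K => (j : ℕ) ≤ m), |x j| ≤ 1 := by
    intro j _; rcases hx j with h | h <;> simp [h]
  calc |S m x| ≤ ∑ j ∈ Finset.univ.filter (fun j : Fin K => (j : ℕ) ≤ m), |x j| :=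
        Finset.abs_sum_le_sum_abs _ _
    _ ≤ ∑ _j ∈ Finset.univ.filter (fun j : Fin K => (j : ℕ) ≤ m), (1 : ℝ) :=
        Finset.sum_le_sum h1
    _ ≤ K := by
        rw [Finset.sum_const, nsmul_eq_mul, mul_one]
        exact_mod_cast Finset.card_filter_le _ _ |>.trans (by simp)

lemma integrable_Y (ν : Measure (Fin K → ℝ)) [IsProbabilityMeasure ν]
    (h01ae : ∀ᵐ x ∂ν, ∀ i, x i = 0 ∨ x i = 1) (m : ℕ) :
    Integrable (Y m) ν := by
  refine Integrable.mono' (integrable_const (K:ℝ)) (measurable_Y m).aestronglyMeasurable ?_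
  filter_upwards [h01ae] with x hx
  have h1 : |S m x| ≤ K := abs_S_le m x hx
  have h2 : |((m : ℝ) + 1)⁻¹| ≤ 1 := by
    rw [abs_of_nonneg (by positivity)]
    rw [inv_le_one_iff₀]; right; linarith [Nat.cast_nonneg (α := ℝ) m]
  calc |Y m x| = |((m : ℝ) + 1)⁻¹| * |S m x| := abs_mul _ _
    _ ≤ 1 * (K : ℝ) := by
        exact mul_le_mul h2 h1 (abs_nonneg _) zero_le_one
    _ = K := one_mul _

lemma setint_S (ν : Measure (Fin K → ℝ)) [IsProbabilityMeasure ν]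
    (h01ae : ∀ᵐ x ∂ν, ∀ i, x i = 0 ∨ x i = 1) (s : Set (Fin K → ℝ)) (m' : ℕ) :
    ∫ x in s, S m' x ∂ν =
      ∑ j ∈ Finset.univ.filter (fun j : Fin K => (j : ℕ) ≤ m'), ∫ x in s, x j ∂ν := by
  exact integral_finset_sum _ fun j _ => (integrable_coord ν h01ae j).integrableOn

lemma key_Y (ν : Measure (Fin K → ℝ)) [IsProbabilityMeasure ν]
    (hswap : ∀ e : Equiv.Perm (Fin K), Measure.map (fun x : Fin K → ℝ => x ∘ e) ν = ν)
    (h01ae : ∀ᵐ x ∂ν, ∀ i, x i = 0 ∨ x i = 1) (m : ℕ) (hm : m + 1 < K) :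
    ∫ x in B K m, Y m x ∂ν = ∫ x in B K m, Y (m + 1) x ∂ν := by
  have hv : ∀ m' : ℕ, m' < K → m' ≤ m + 1 →
      ∫ x in B K m, S m' x ∂ν =
        ((m' : ℝ) + 1) * ∫ x in B K m, x ⟨m + 1, hm⟩ ∂ν := by
    intro m' hm' hle
    rw [setint_S ν h01ae _ m']
    rw [Finset.sum_congr rfl (fun j hj => key_coord ν hswap m hm j (by
      simp only [Finset.mem_filter, Finset.mem_univ, true_and] at hj; omega))]
    rw [Finset.sum_const, filter_card m' hm', nsmul_eq_mul]
    push_cast; ring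
  show ∫ x in B K m, ((m : ℝ) + 1)⁻¹ * S m x ∂ν =
    ∫ x in B K m, ((↑(m + 1) : ℝ) + 1)⁻¹ * S (m + 1) x ∂ν
  rw [integral_const_mul, integral_const_mul, hv m (by omega) (by omega),
    hv (m + 1) hm le_rfl, ← mul_assoc, ← mul_assoc,
    inv_mul_cancel₀ (by positivity), inv_mul_cancel₀ (by positivity)]

end ExchRM

namespace ExchRM
variable {K : ℕ}

lemma C_succ (m : ℕ) : C K (m + 1) = B K (m + 1) \ B K m := by
  simp [C]

lemma B_union_C (m : ℕ) : B K (m + 1) = B K m ∪ C K (m + 1) := by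
  rw [C_succ]
  rw [Set.union_diff_cancel (B_mono (by omega))]

lemma telescope (ν : Measure (Fin K → ℝ)) [IsProbabilityMeasure ν]
    (hswap : ∀ e : Equiv.Perm (Fin K), Measure.map (fun x : Fin K → ℝ => x ∘ e) ν = ν)
    (h01ae : ∀ᵐ x ∂ν, ∀ i, x i = 0 ∨ x i = 1) :
    ∀ m : ℕ, m < K → ∫ x in B K m, Y m x ∂ν =
      ∑ i ∈ Finset.range (m + 1), ∫ x in C K i, Y i x ∂ν := by
  intro m
  induction m with
  | zero =>
    intro _
    simp [C]
  | succ m ih =>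
    intro hm
    have h1 : ∫ x in B K (m + 1), Y (m + 1) x ∂ν =
        ∫ x in B K m, Y (m + 1) x ∂ν + ∫ x in C K (m + 1), Y (m + 1) x ∂ν := by
      rw [B_union_C m]
      refine setIntegral_union ?_ (measurableSet_C (m + 1))
        ((integrable_Y ν h01ae _).integrableOn) ((integrable_Y ν h01ae _).integrableOn)
      rw [C_succ]
      exact Set.disjoint_sdiff_right.mono_left Set.Subset.rfl |>.symm.symm
    rw [h1, ← key_Y ν hswap h01ae m hm, ih (by omega),
      Finset.sum_range_succ _ (m + 1), Finset.sum_range_succ _ m]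

lemma half_le (i : ℕ) (x : Fin K → ℝ) (hx : x ∈ C K i ∩ A K) : 1 / 2 ≤ Y i x := by
  obtain ⟨hc, hA⟩ := hx
  rcases Nat.eq_zero_or_pos i with rfl | hi
  · simp only [C, if_pos rfl] at hc
    obtain ⟨k, hk⟩ := hA
    have hk0 : (k : ℕ) = 0 := by
      by_contra h
      have := hc k (by omega)
      linarith
    rwa [hk0] at hk
  · rw [C, if_neg (by omega)] at hc
    obtain ⟨hBi, hnB⟩ := hc
    simp only [B, Set.mem_setOf_eq, not_forall] at hnB
    obtain ⟨j, hj1, hj2⟩ := hnB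
    push_neg at hj2
    have hji : (j : ℕ) = i := by
      by_contra h
      have hgt : i < (j : ℕ) := by omega
      have := hBi j hgt
      linarith
    rwa [hji] at hj2

lemma C_cover (x : Fin K → ℝ) (hK : 1 ≤ K) : ∃ i < K, x ∈ C K i := by
  have hB : x ∈ B K (K - 1) := by
    intro j hj
    have := j.isLt
    omega
  have key : ∀ m : ℕ, x ∈ B K m → ∃ i ≤ m, x ∈ C K i := by
    intro m
    induction m with
    | zero => intro h; exact ⟨0, le_rfl, by simpa [C] using h⟩
    | succ m ih =>
      intro h
      by_cases hm : x ∈ B K m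
      · obtain ⟨i, hi, hci⟩ := ih hm
        exact ⟨i, by omega, hci⟩
      · exact ⟨m + 1, le_rfl, by rw [C_succ]; exact ⟨h, hm⟩⟩
  obtain ⟨i, hi, hci⟩ := key (K - 1) hB
  exact ⟨i, by omega, hci⟩

lemma C_disjoint {i j : ℕ} (h : i < j) : Disjoint (C K i) (C K j) := by
  have h1 : C K i ⊆ B K (j - 1) := by
    have : C K i ⊆ B K i := by
      unfold C; split
      · subst ‹i = 0›; exact Set.Subset.rfl
      · exact Set.diff_subset
    exact this.trans (B_mono (by omega))
  have h2 : Disjoint (B K (j - 1)) (C K j) := by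
    rw [C, if_neg (by omega)]
    exact Set.disjoint_sdiff_right
  exact h2.mono_left h1

end ExchRM

namespace ExchRM
variable {K : ℕ}

lemma master (ν : Measure (Fin K → ℝ)) [IsProbabilityMeasure ν] (hK : 1 ≤ K)
    (hswap : ∀ e : Equiv.Perm (Fin K), Measure.map (fun x : Fin K → ℝ => x ∘ e) ν = ν)
    (h01ae : ∀ᵐ x ∂ν, ∀ i, x i = 0 ∨ x i = 1)
    (α : ℝ) (hα0 : 0 ≤ α) (hexp : ∀ i : Fin K, ∫ x, x i ∂ν ≤ α) :
    ν (A K) ≤ ENNReal.ofReal (2 * α) := by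
  have hKR : (0 : ℝ) < K := by exact_mod_cast hK
  have hBtop : B K (K - 1) = Set.univ := by
    ext x
    simp only [B, Set.mem_setOf_eq, Set.mem_univ, iff_true]
    intro j hj
    exact absurd j.isLt (by omega)
  have hfilter : (Finset.univ.filter (fun j : Fin K => (j : ℕ) ≤ K - 1)) = Finset.univ := by
    ext j
    simp only [Finset.mem_filter, Finset.mem_univ, true_and, iff_true]
    have := j.isLt; omega
  have hup : ∫ x, Y (K - 1) x ∂ν ≤ α := by
    have h1 : ∫ x, S (K - 1) x ∂ν = ∑ j : Fin K, ∫ x, x j ∂ν := by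
      rw [show (fun x : Fin K → ℝ => S (K - 1) x) =
        fun x => ∑ j ∈ Finset.univ.filter (fun j : Fin K => (j : ℕ) ≤ K - 1), x j from rfl]
      rw [integral_finset_sum _ (fun j _ => integrable_coord ν h01ae j), hfilter]
    have h2 : ∑ j : Fin K, ∫ x, x j ∂ν ≤ K * α := by
      calc ∑ j : Fin K, ∫ x, x j ∂ν ≤ ∑ _j : Fin K, α :=
            Finset.sum_le_sum fun j _ => hexp j
        _ = K * α := by
            rw [Finset.sum_const, Finset.card_univ, Fintype.card_fin, nsmul_eq_mul]
    have hc : (((K - 1 : ℕ) : ℝ)) + 1 = K := by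
      rw [Nat.cast_sub hK]; push_cast; ring
    show ∫ x, (((K - 1 : ℕ) : ℝ) + 1)⁻¹ * S (K - 1) x ∂ν ≤ α
    rw [integral_const_mul, h1, hc]
    calc (K : ℝ)⁻¹ * (∑ j : Fin K, ∫ x, x j ∂ν) ≤ (K : ℝ)⁻¹ * ((K : ℝ) * α) :=
          mul_le_mul_of_nonneg_left h2 (by positivity)
      _ = α := by field_simp
  have hYnn : ∀ i : ℕ, ∀ᵐ x ∂ν, 0 ≤ Y i x := by
    intro i
    filter_upwards [h01ae] with x hx
    refine mul_nonneg (by positivity) (Finset.sum_nonneg fun j _ => ?_)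
    rcases hx j with h | h <;> simp [h]
  have hlow : ∀ i : ℕ, i < K →
      (1 / 2) * (ν (C K i ∩ A K)).toReal ≤ ∫ x in C K i, Y i x ∂ν := by
    intro i hi
    have hCi := measurableSet_C (K := K) i
    have hsplit : ∫ x in C K i, Y i x ∂ν =
        ∫ x in C K i ∩ A K, Y i x ∂ν + ∫ x in C K i \ A K, Y i x ∂ν := by
      conv_lhs => rw [show C K i = (C K i ∩ A K) ∪ (C K i \ A K) from
        (Set.inter_union_diff _ _).symm]
      exact setIntegral_union
        (Set.disjoint_sdiff_right.mono_left Set.inter_subset_right)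
        (hCi.diff measurableSet_A)
        ((integrable_Y ν h01ae i).integrableOn)
        ((integrable_Y ν h01ae i).integrableOn)
    have h1 : (1 / 2) * (ν (C K i ∩ A K)).toReal ≤ ∫ x in C K i ∩ A K, Y i x ∂ν :=
      setIntegral_ge_of_const_le_real (hCi.inter measurableSet_A) (measure_ne_top _ _)
        (fun x hx => half_le i x hx) ((integrable_Y ν h01ae i).integrableOn)
    have h2 : 0 ≤ ∫ x in C K i \ A K, Y i x ∂ν := setIntegral_nonneg_of_ae (hYnn i)
    linarith
  have hcoverA : A K = ⋃ i ∈ Finset.range K, (C K i ∩ A K) := by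
    ext x
    constructor
    · intro hx
      obtain ⟨i, hi, hci⟩ := C_cover x hK
      exact Set.mem_biUnion (Finset.mem_range.mpr hi) ⟨hci, hx⟩
    · intro hx
      simp only [Set.mem_iUnion] at hx
      obtain ⟨i, _, _, h⟩ := hx
      exact h
  have hsum : ν (A K) = ∑ i ∈ Finset.range K, ν (C K i ∩ A K) := by
    conv_lhs => rw [hcoverA]
    refine measure_biUnion_finset ?_ (fun i _ => (measurableSet_C i).inter measurableSet_A)
    intro i hi j hj hij
    rcases lt_or_gt_of_ne hij with h | h
    · exact (C_disjoint h).mono Set.inter_subset_left Set.inter_subset_left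
    · exact (C_disjoint h).symm.mono Set.inter_subset_left Set.inter_subset_left
  have hsumR : (ν (A K)).toReal = ∑ i ∈ Finset.range K, (ν (C K i ∩ A K)).toReal := by
    rw [hsum, ENNReal.toReal_sum fun i _ => measure_ne_top _ _]
  have hfinal : (1 / 2) * (ν (A K)).toReal ≤ α := by
    calc (1 / 2) * (ν (A K)).toReal
        = ∑ i ∈ Finset.range K, (1 / 2) * (ν (C K i ∩ A K)).toReal := by
          rw [hsumR, Finset.mul_sum]
      _ ≤ ∑ i ∈ Finset.range K, ∫ x in C K i, Y i x ∂ν :=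
          Finset.sum_le_sum fun i hi => hlow i (Finset.mem_range.mp hi)
      _ = ∫ x in B K (K - 1), Y (K - 1) x ∂ν := by
          rw [telescope ν hswap h01ae (K - 1) (by omega),
            show K - 1 + 1 = K from Nat.succ_pred_eq_of_pos hK]
      _ = ∫ x, Y (K - 1) x ∂ν := by rw [hBtop, Measure.restrict_univ]
      _ ≤ α := hup
  rw [ENNReal.le_ofReal_iff_toReal_le (measure_ne_top _ _) (by positivity)]
  linarith

end ExchRM

open MeasureTheory

/-- Exchangeable Markov inequality for running majority vote: if `φ 0, …, φ (K-1)`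
are exchangeable Bernoulli random variables with mean at most `α`, then the
probability that some running average `(1/k) ∑_{j<k} φ j` reaches `1/2` is at
most `2α`. -/
theorem exchangeable_running_majority {Ω : Type*} [MeasurableSpace Ω]
    (μ : Measure Ω) [IsProbabilityMeasure μ]
    (K : ℕ) (hK : 2 ≤ K) (α : ℝ) (hα0 : 0 ≤ α) (hα1 : α ≤ 1)
    (φ : Fin K → Ω → ℝ)
    (hmeas : ∀ k, Measurable (φ k))
    (h01 : ∀ k ω, φ k ω = 0 ∨ φ k ω = 1)
    (hexch : ∀ e : Equiv.Perm (Fin K),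
      Measure.map (fun ω (k : Fin K) => φ (e k) ω) μ =
        Measure.map (fun ω (k : Fin K) => φ k ω) μ)
    (hexp : ∀ k, ∫ ω, φ k ω ∂μ ≤ α) :
    μ {ω | ∃ k : Fin K,
        (1 : ℝ) / 2 ≤ ((k : ℕ) + 1 : ℝ)⁻¹ *
          ∑ j ∈ Finset.univ.filter (fun j => j ≤ k), φ j ω} ≤
      ENNReal.ofReal (2 * α) := by
  classical
  set V : Ω → (Fin K → ℝ) := fun ω k => φ k ω with hVdef
  have hVm : Measurable V := measurable_pi_lambda _ hmeas
  set ν := Measure.map V μ with hνdef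
  haveI : IsProbabilityMeasure ν := Measure.isProbabilityMeasure_map hVm.aemeasurable
  have hswap : ∀ e : Equiv.Perm (Fin K),
      Measure.map (fun x : Fin K → ℝ => x ∘ e) ν = ν := by
    intro e
    rw [hνdef, Measure.map_map (ExchRM.measurable_comp_perm e) hVm]
    have heq : (fun x : Fin K → ℝ => x ∘ e) ∘ V = fun ω (k : Fin K) => φ (e k) ω := rfl
    rw [heq, hexch e]
  have h01set : MeasurableSet {x : Fin K → ℝ | ∀ i, x i = 0 ∨ x i = 1} := by
    have heq : {x : Fin K → ℝ | ∀ i, x i = 0 ∨ x i = 1} =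
        ⋂ i, ((fun x : Fin K → ℝ => x i) ⁻¹' {0, 1}) := by
      ext x; simp [Set.mem_iInter]
    rw [heq]
    exact MeasurableSet.iInter fun i =>
      (measurable_pi_apply i) ((measurableSet_singleton (1 : ℝ)).insert 0)
  have h01ae : ∀ᵐ x ∂ν, ∀ i, x i = 0 ∨ x i = 1 := by
    rw [hνdef, MeasureTheory.ae_map_iff hVm.aemeasurable h01set]
    exact Filter.Eventually.of_forall fun ω i => h01 i ω
  have hexpν : ∀ i : Fin K, ∫ x, x i ∂ν ≤ α := by
    intro i
    rw [hνdef, integral_map hVm.aemeasurable (measurable_pi_apply i).aestronglyMeasurable]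
    exact hexp i
  have hfil : ∀ k : Fin K, Finset.univ.filter (fun j : Fin K => j ≤ k) =
      Finset.univ.filter (fun j : Fin K => (j : ℕ) ≤ (k : ℕ)) := by
    intro k; ext j
    simp only [Finset.mem_filter, Finset.mem_univ, true_and]
    exact Fin.le_def
  have hset : {ω | ∃ k : Fin K,
        (1 : ℝ) / 2 ≤ ((k : ℕ) + 1 : ℝ)⁻¹ *
          ∑ j ∈ Finset.univ.filter (fun j => j ≤ k), φ j ω} = V ⁻¹' (ExchRM.A K) := by
    have hYeq : ∀ (k : Fin K) (ω : Ω), ExchRM.Y (k : ℕ) (V ω) =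
        ((k : ℕ) + 1 : ℝ)⁻¹ * ∑ j ∈ Finset.univ.filter (fun j => j ≤ k), φ j ω := by
      intro k ω
      show (((k : ℕ) : ℝ) + 1)⁻¹ *
        (∑ j ∈ Finset.univ.filter (fun j : Fin K => (j : ℕ) ≤ (k : ℕ)), V ω j) = _
      rw [hfil k]
    ext ω
    simp only [Set.mem_setOf_eq, Set.mem_preimage, ExchRM.A]
    exact exists_congr fun k => by rw [hYeq k ω]
  rw [hset, ← Measure.map_apply hVm ExchRM.measurableSet_A]
  exact ExchRM.master ν (by omega) hswap h01ae α hα0 hexpν
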